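/- Let S be a ℤ^k-graded ring with grading 𝒜 : (Fin k → ℤ) → AddSubgroup S and positive subring R = S_+, and suppose that for every non-zero v ∈ Fin k → ℕ and every non-zero x ∈ 𝒜 v there exists y ∈ 𝒜 (−v) with x * y ≠ 0. Let A be a right ideal of R whose right annihilator A^r in R is non-trivial. Then A^r contains a graded (two-sided) ideal of R that intersects the degree-0 component 𝒜 0 non-trivially. -/

import Mathlib

/-- `s` belongs to the positive subring `S₊` of the `ℤ^k`-graded ring `S`: all of its
non-zero homogeneous components have degree in `ℕ^k` (all coordinates non-negative). -/
def MemPositiveSubring {k : ℕ} {S : Type*} [Ring S]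
    (𝒜 : (Fin k → ℤ) → AddSubgroup S) [GradedRing 𝒜] (s : S) : Prop :=
  ∀ v : Fin k → ℤ, (DirectSum.decompose 𝒜 s v : S) ≠ 0 → ∀ i : Fin k, 0 ≤ v i

section Aux
variable {k : ℕ} {S : Type*} [Ring S] (𝒜 : (Fin k → ℤ) → AddSubgroup S) [GradedRing 𝒜]

theorem grA_dzero (w : Fin k → ℤ) : (DirectSum.decompose 𝒜 (0 : S) w : S) = 0 := by
  rw [DirectSum.decompose_zero]; rfl

theorem grA_memPos_zero : MemPositiveSubring 𝒜 (0 : S) := by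
  intro w hw
  exact absurd (grA_dzero 𝒜 w) hw

theorem grA_memPos_of_mem {v : Fin k → ℤ} {x : S} (hx : x ∈ 𝒜 v) (hv : ∀ i, 0 ≤ v i) :
    MemPositiveSubring 𝒜 x := by
  intro w hw i
  by_cases h : v = w
  · exact h ▸ hv i
  · rw [DirectSum.decompose_of_mem_ne 𝒜 hx h] at hw
    exact absurd rfl hw

theorem grA_memPos_component {z : S} (hz : MemPositiveSubring 𝒜 z) (v : Fin k → ℤ) :
    MemPositiveSubring 𝒜 ((DirectSum.decompose 𝒜 z v : S)) := by
  by_cases h : (DirectSum.decompose 𝒜 z v : S) = 0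
  · rw [h]; exact grA_memPos_zero 𝒜
  · exact grA_memPos_of_mem 𝒜 (SetLike.coe_mem _) (hz v h)

theorem grA_dadd (x y : S) (w : Fin k → ℤ) :
    (DirectSum.decompose 𝒜 (x + y) w : S) =
      (DirectSum.decompose 𝒜 x w : S) + (DirectSum.decompose 𝒜 y w : S) := by
  rw [DirectSum.decompose_add, DirectSum.add_apply]; rfl

theorem grA_dneg (x : S) (w : Fin k → ℤ) :
    (DirectSum.decompose 𝒜 (-x) w : S) = -(DirectSum.decompose 𝒜 x w : S) := by
  have h := grA_dadd 𝒜 x (-x) w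
  rw [add_neg_cancel, grA_dzero] at h
  exact (neg_eq_of_add_eq_zero_right h.symm).symm

theorem grA_dsub (x y : S) (w : Fin k → ℤ) :
    (DirectSum.decompose 𝒜 (x - y) w : S) =
      (DirectSum.decompose 𝒜 x w : S) - (DirectSum.decompose 𝒜 y w : S) := by
  rw [sub_eq_add_neg, sub_eq_add_neg, grA_dadd, grA_dneg]

theorem grA_memPos_add {x y : S} (hx : MemPositiveSubring 𝒜 x) (hy : MemPositiveSubring 𝒜 y) :
    MemPositiveSubring 𝒜 (x + y) := by
  intro w hw i
  rw [grA_dadd] at hw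
  by_cases h : (DirectSum.decompose 𝒜 x w : S) = 0
  · exact hy w (by intro h'; rw [h, h', add_zero] at hw; exact hw rfl) i
  · exact hx w h i

theorem grA_memPos_neg {x : S} (hx : MemPositiveSubring 𝒜 x) :
    MemPositiveSubring 𝒜 (-x) := by
  intro w hw i
  rw [grA_dneg] at hw
  exact hx w (fun h => hw (by rw [h, neg_zero])) i

theorem grA_memPos_sub {x y : S} (hx : MemPositiveSubring 𝒜 x) (hy : MemPositiveSubring 𝒜 y) :
    MemPositiveSubring 𝒜 (x - y) := by
  rw [sub_eq_add_neg]
  exact grA_memPos_add 𝒜 hx (grA_memPos_neg 𝒜 hy)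

theorem grA_dsum {ι' : Type*} (F : Finset ι') (f : ι' → S) (w : Fin k → ℤ) :
    (DirectSum.decompose 𝒜 (∑ i ∈ F, f i) w : S) =
      ∑ i ∈ F, (DirectSum.decompose 𝒜 (f i) w : S) := by
  classical
  induction F using Finset.induction_on with
  | empty => simp [grA_dzero]
  | insert _ _ h ih =>
      rw [Finset.sum_insert h, Finset.sum_insert h, grA_dadd, ih]

/-- Induction principle for components of a product. -/
theorem grA_P_mul (P : S → Prop) (h0 : P 0) (hadd : ∀ x y, P x → P y → P (x + y))
    (z t : S) (w : Fin k → ℤ)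
    (hterm : ∀ u u', u + u' = w →
      P ((DirectSum.decompose 𝒜 z u : S) * (DirectSum.decompose 𝒜 t u' : S))) :
    P ((DirectSum.decompose 𝒜 (z * t) w : S)) := by
  classical
  have hzt : z * t = ∑ u ∈ (DirectSum.decompose 𝒜 z).support,
      ∑ u' ∈ (DirectSum.decompose 𝒜 t).support,
        (DirectSum.decompose 𝒜 z u : S) * (DirectSum.decompose 𝒜 t u' : S) := by
    conv_lhs => rw [← DirectSum.sum_support_decompose 𝒜 z, ← DirectSum.sum_support_decompose 𝒜 t]
    rw [Finset.sum_mul_sum]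
  rw [hzt, grA_dsum]
  refine Finset.sum_induction _ _ hadd h0 ?_
  intro u _
  rw [grA_dsum]
  refine Finset.sum_induction _ _ hadd h0 ?_
  intro u' _
  have hmem : (DirectSum.decompose 𝒜 z u : S) * (DirectSum.decompose 𝒜 t u' : S) ∈ 𝒜 (u + u') :=
    SetLike.mul_mem_graded (SetLike.coe_mem _) (SetLike.coe_mem _)
  by_cases h : u + u' = w
  · rw [← h, DirectSum.decompose_of_mem_same 𝒜 hmem]
    exact hterm u u' h
  · rw [DirectSum.decompose_of_mem_ne 𝒜 hmem h]
    exact h0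

theorem grA_memPos_mul {z t : S} (hz : MemPositiveSubring 𝒜 z) (ht : MemPositiveSubring 𝒜 t) :
    MemPositiveSubring 𝒜 (z * t) := by
  intro w
  refine grA_P_mul 𝒜 (fun x => x ≠ 0 → ∀ i, 0 ≤ w i) (fun h => absurd rfl h) ?_ z t w ?_
  · intro x y hx hy hxy i
    by_cases h : x = 0
    · exact hy (by intro h'; rw [h, h', add_zero] at hxy; exact hxy rfl) i
    · exact hx h i
  · intro u u' huw h i
    have h1 : (DirectSum.decompose 𝒜 z u : S) ≠ 0 := left_ne_zero_of_mul h
    have h2 : (DirectSum.decompose 𝒜 t u' : S) ≠ 0 := right_ne_zero_of_mul h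
    have := add_nonneg (hz u h1 i) (ht u' h2 i)
    rw [← huw]
    exact this

theorem grA_sum_ann {a z : S} (hz : ∀ w, a * (DirectSum.decompose 𝒜 z w : S) = 0) : a * z = 0 := by
  classical
  rw [← DirectSum.sum_support_decompose 𝒜 z, Finset.mul_sum]
  exact Finset.sum_eq_zero fun w _ => hz w

end Aux

/-- Let `R = S₊` be the positive subring of a `ℤ^k`-graded ring `S` such that for every
non-zero `v ∈ ℕ^k` and non-zero `x ∈ 𝒜 v` there is `y ∈ 𝒜 (-v)` with `x * y ≠ 0`.
If a right ideal `A` of `R` has non-trivial right annihilator `A^r` in `R`, then `A^r`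
contains a graded two-sided ideal `I` of `R` intersecting the degree-`0` component
non-trivially. -/
theorem annihilator_contains_graded_ideal_meeting_degree_zero
    {k : ℕ} {S : Type*} [Ring S]
    (𝒜 : (Fin k → ℤ) → AddSubgroup S) [GradedRing 𝒜]
    (hS : ∀ v : Fin k → ℕ, v ≠ 0 → ∀ x ∈ 𝒜 (fun i => (v i : ℤ)), x ≠ 0 →
      ∃ y ∈ 𝒜 (-(fun i => (v i : ℤ))), x * y ≠ 0)
    (A : AddSubgroup S) (hAsub : ∀ a ∈ A, MemPositiveSubring 𝒜 a)
    (hA : ∀ a ∈ A, ∀ t : S, MemPositiveSubring 𝒜 t → a * t ∈ A)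
    (hann : ∃ t : S, MemPositiveSubring 𝒜 t ∧ t ≠ 0 ∧ ∀ a ∈ A, a * t = 0) :
    ∃ I : AddSubgroup S,
      (∀ z ∈ I, MemPositiveSubring 𝒜 z) ∧
      (∀ z ∈ I, ∀ t : S, MemPositiveSubring 𝒜 t → z * t ∈ I ∧ t * z ∈ I) ∧
      (∀ z ∈ I, ∀ a ∈ A, a * z = 0) ∧
      (∀ z ∈ I, ∀ v : Fin k → ℤ, (DirectSum.decompose 𝒜 z v : S) ∈ I) ∧
      (∃ x ∈ I, x ∈ 𝒜 (0 : Fin k → ℤ) ∧ x ≠ 0) := by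
  classical
  letI : WellFoundedLT (Fin k) := inferInstance
  letI : LinearOrder (Lex (Fin k → ℤ)) := inferInstance
  obtain ⟨t0, ht0pos, ht0ne, ht0ann⟩ := hann
  have hPPex : ∃ nn : ℕ, ∃ t : S, MemPositiveSubring 𝒜 t ∧ t ≠ 0 ∧ (∀ a ∈ A, a * t = 0) ∧
      (DirectSum.decompose 𝒜 t).support.card = nn :=
    ⟨_, t0, ht0pos, ht0ne, ht0ann, rfl⟩
  obtain ⟨t, htpos, htne, htann, htcard⟩ := Nat.find_spec hPPex
  set n := Nat.find hPPex with hn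
  have hmin : ∀ s : S, MemPositiveSubring 𝒜 s → (∀ a ∈ A, a * s = 0) →
      (DirectSum.decompose 𝒜 s).support.card < n → s = 0 := by
    intro s hspos hsann hscard
    by_contra hs0
    exact Nat.find_min hPPex hscard ⟨s, hspos, hs0, hsann, rfl⟩
  have hmemsupp : ∀ (z : S) (w : Fin k → ℤ),
      w ∈ (DirectSum.decompose 𝒜 z).support ↔ (DirectSum.decompose 𝒜 z w : S) ≠ 0 := by
    intro z w
    rw [DFinsupp.mem_support_iff]
    exact not_congr (ZeroMemClass.coe_eq_zero).symm
  have htsupp : (DirectSum.decompose 𝒜 t).support.Nonempty := by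
    by_contra h
    rw [Finset.not_nonempty_iff_eq_empty] at h
    apply htne
    rw [← DirectSum.sum_support_decompose 𝒜 t, h, Finset.sum_empty]
  have hn1 : 1 ≤ n := by
    rw [← htcard]; exact Finset.card_pos.mpr htsupp
  obtain ⟨vstar, hvstar_mem, hvstar_max⟩ :=
    Finset.exists_max_image (DirectSum.decompose 𝒜 t).support (fun v => toLex v) htsupp
  -- the key lemma: if `b` is positive and `b * t = 0` then every homogeneous
  -- component of `b` annihilates `t`.
  have key : ∀ (m : ℕ) (b : S), (DirectSum.decompose 𝒜 b).support.card ≤ m →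
      MemPositiveSubring 𝒜 b → b * t = 0 →
      ∀ w, (DirectSum.decompose 𝒜 b w : S) * t = 0 := by
    intro m
    induction m with
    | zero =>
        intro b hcard _ _ w
        have hemp : (DirectSum.decompose 𝒜 b).support = ∅ :=
          Finset.card_eq_zero.mp (Nat.le_zero.mp hcard)
        have hw : (DirectSum.decompose 𝒜 b w : S) = 0 := by
          by_contra h
          have hmem := (hmemsupp b w).mpr h
          rw [hemp] at hmem
          exact absurd hmem (Finset.notMem_empty w)
        rw [hw, zero_mul]
    | succ m ih =>
        intro b hcard hbpos hbt w
        by_cases hbs : (DirectSum.decompose 𝒜 b).support.Nonempty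
        · obtain ⟨wstar, hwstar_mem, hwstar_max⟩ :=
            Finset.exists_max_image (DirectSum.decompose 𝒜 b).support (fun v => toLex v) hbs
          have hcA : (DirectSum.decompose 𝒜 b wstar : S) ∈ 𝒜 wstar := SetLike.coe_mem _
          have hcpos : MemPositiveSubring 𝒜 (DirectSum.decompose 𝒜 b wstar : S) :=
            grA_memPos_component 𝒜 hbpos wstar
          -- the top coefficient of `b * t = 0` is `b_{w*} * t_{v*}`.
          have htop : (DirectSum.decompose 𝒜 b wstar : S) *
              (DirectSum.decompose 𝒜 t vstar : S) = 0 := by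
            have hW : (DirectSum.decompose 𝒜 (b * t) (wstar + vstar) : S) = 0 := by
              rw [hbt, grA_dzero]
            have hexp : (DirectSum.decompose 𝒜 (b * t) (wstar + vstar) : S) =
                ∑ u ∈ (DirectSum.decompose 𝒜 b).support,
                  (DirectSum.decompose 𝒜 b u : S) *
                    (DirectSum.decompose 𝒜 t (wstar + vstar - u) : S) := by
              conv_lhs =>
                rw [show b * t = ∑ u ∈ (DirectSum.decompose 𝒜 b).support,
                    (DirectSum.decompose 𝒜 b u : S) * t by
                  conv_lhs => rw [← DirectSum.sum_support_decompose 𝒜 b]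
                  rw [Finset.sum_mul]]
              rw [grA_dsum]
              refine Finset.sum_congr rfl ?_
              intro u _
              have h6 := DirectSum.coe_decompose_mul_add_of_left_mem 𝒜
                (SetLike.coe_mem (DirectSum.decompose 𝒜 b u)) (b := t) (j := wstar + vstar - u)
              rw [show u + (wstar + vstar - u) = wstar + vstar by abel] at h6
              exact h6
            have hside : ∀ u ∈ (DirectSum.decompose 𝒜 b).support, u ≠ wstar →
                (DirectSum.decompose 𝒜 b u : S) *
                  (DirectSum.decompose 𝒜 t (wstar + vstar - u) : S) = 0 := by
              intro u hu hne
              by_contra hterm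
              have h2 : (DirectSum.decompose 𝒜 t (wstar + vstar - u) : S) ≠ 0 :=
                right_ne_zero_of_mul hterm
              have hle : toLex (wstar + vstar - u) ≤ toLex vstar :=
                hvstar_max _ ((hmemsupp t _).mpr h2)
              have hult : toLex u < toLex wstar :=
                lt_of_le_of_ne (hwstar_max u hu) (fun h => hne (toLex.injective h))
              have hlt : toLex vstar < toLex (wstar + vstar - u) := by
                have h3 : toLex (wstar + vstar - u) = toLex wstar + toLex vstar - toLex u := rfl
                rw [h3]
                refine lt_sub_iff_add_lt.mpr ?_
                calc toLex vstar + toLex u = toLex u + toLex vstar := by abel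
                  _ < toLex wstar + toLex vstar := add_lt_add_of_lt_of_le hult le_rfl
              exact absurd hle (not_le.mpr hlt)
            have hsingle := Finset.sum_eq_single_of_mem wstar hwstar_mem hside
            rw [hexp, hsingle, show wstar + vstar - wstar = vstar by abel] at hW
            exact hW
          -- `b_{w*} * t` lies in the annihilator, is positive and has small support
          have hspos : MemPositiveSubring 𝒜 ((DirectSum.decompose 𝒜 b wstar : S) * t) :=
            grA_memPos_mul 𝒜 hcpos htpos
          have hsann : ∀ a ∈ A, a * ((DirectSum.decompose 𝒜 b wstar : S) * t) = 0 := by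
            intro a ha
            rw [← mul_assoc]
            exact htann _ (hA a ha _ hcpos)
          have hssub : (DirectSum.decompose 𝒜 ((DirectSum.decompose 𝒜 b wstar : S) * t)).support ⊆
              ((DirectSum.decompose 𝒜 t).support.image (fun v => wstar + v)).erase
                (wstar + vstar) := by
            intro u hu
            have hune := (hmemsupp _ u).mp hu
            have heq : (DirectSum.decompose 𝒜 ((DirectSum.decompose 𝒜 b wstar : S) * t) u : S) =
                (DirectSum.decompose 𝒜 b wstar : S) *
                  (DirectSum.decompose 𝒜 t (u - wstar) : S) := by
              have h6 := DirectSum.coe_decompose_mul_add_of_left_mem 𝒜 hcA (b := t)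
                (j := u - wstar)
              rw [show wstar + (u - wstar) = u by abel] at h6
              exact h6
            rw [heq] at hune
            have h2 : (DirectSum.decompose 𝒜 t (u - wstar) : S) ≠ 0 :=
              right_ne_zero_of_mul hune
            refine Finset.mem_erase.mpr ⟨?_,
              Finset.mem_image.mpr ⟨u - wstar, (hmemsupp t _).mpr h2, by abel⟩⟩
            intro hueq
            apply hune
            rw [show u - wstar = vstar by rw [hueq]; abel, htop]
          have hscard : (DirectSum.decompose 𝒜
              ((DirectSum.decompose 𝒜 b wstar : S) * t)).support.card < n := by
            have h1 := Finset.card_le_card hssub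
            have h2 := Finset.card_erase_of_mem
              (Finset.mem_image.mpr ⟨vstar, hvstar_mem, rfl⟩ :
                wstar + vstar ∈ (DirectSum.decompose 𝒜 t).support.image (fun v => wstar + v))
            have h3 := Finset.card_image_le
              (s := (DirectSum.decompose 𝒜 t).support) (f := fun v => wstar + v)
            omega
          have hs0 : (DirectSum.decompose 𝒜 b wstar : S) * t = 0 :=
            hmin _ hspos hsann hscard
          -- pass to `b - b_{w*}` which has strictly smaller support
          have hb't : (b - (DirectSum.decompose 𝒜 b wstar : S)) * t = 0 := by
            rw [sub_mul, hbt, hs0, sub_zero]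
          have hb'pos : MemPositiveSubring 𝒜 (b - (DirectSum.decompose 𝒜 b wstar : S)) :=
            grA_memPos_sub 𝒜 hbpos hcpos
          have hdb' : ∀ w' : Fin k → ℤ,
              (DirectSum.decompose 𝒜 (b - (DirectSum.decompose 𝒜 b wstar : S)) w' : S) =
                if w' = wstar then 0 else (DirectSum.decompose 𝒜 b w' : S) := by
            intro w'
            rw [grA_dsub]
            by_cases h : w' = wstar
            · rw [if_pos h, h, DirectSum.decompose_of_mem_same 𝒜 hcA, sub_self]
            · rw [if_neg h, DirectSum.decompose_of_mem_ne 𝒜 hcA (fun hh => h hh.symm), sub_zero]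
          have hsupp' : (DirectSum.decompose 𝒜
              (b - (DirectSum.decompose 𝒜 b wstar : S))).support ⊆
                (DirectSum.decompose 𝒜 b).support.erase wstar := by
            intro u hu
            have h := (hmemsupp _ u).mp hu
            rw [hdb' u] at h
            by_cases hq : u = wstar
            · rw [if_pos hq] at h; exact absurd rfl h
            · rw [if_neg hq] at h
              exact Finset.mem_erase.mpr ⟨hq, (hmemsupp b u).mpr h⟩
          have hcard' : (DirectSum.decompose 𝒜
              (b - (DirectSum.decompose 𝒜 b wstar : S))).support.card ≤ m := by
            have h1 := Finset.card_le_card hsupp'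
            have h2 := Finset.card_erase_of_mem hwstar_mem
            have h3 : 1 ≤ (DirectSum.decompose 𝒜 b).support.card :=
              Finset.card_pos.mpr hbs
            omega
          have hIH := ih _ hcard' hb'pos hb't
          by_cases hw : w = wstar
          · rw [hw]; exact hs0
          · have hres := hIH w
            rw [hdb' w, if_neg hw] at hres
            exact hres
        · rw [Finset.not_nonempty_iff_eq_empty] at hbs
          have hw : (DirectSum.decompose 𝒜 b w : S) = 0 := by
            by_contra h
            have hmem := (hmemsupp b w).mpr h
            rw [hbs] at hmem
            exact absurd hmem (Finset.notMem_empty w)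
          rw [hw, zero_mul]
  -- hence every element of `A` annihilates every homogeneous component of `t`
  have hcompann : ∀ v : Fin k → ℤ, ∀ a ∈ A, a * (DirectSum.decompose 𝒜 t v : S) = 0 := by
    intro v a ha
    have h1 : ∀ u, (DirectSum.decompose 𝒜 a u : S) * t = 0 :=
      key _ a le_rfl (hAsub a ha) (htann a ha)
    have h2 : ∀ u, (DirectSum.decompose 𝒜 a u : S) * (DirectSum.decompose 𝒜 t v : S) = 0 := by
      intro u
      have h6 := DirectSum.coe_decompose_mul_add_of_left_mem 𝒜
        (SetLike.coe_mem (DirectSum.decompose 𝒜 a u)) (b := t) (j := v)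
      rw [h1 u, grA_dzero] at h6
      exact h6.symm
    conv_lhs => rw [← DirectSum.sum_support_decompose 𝒜 a]
    rw [Finset.sum_mul]
    exact Finset.sum_eq_zero fun u _ => h2 u
  -- a non-zero homogeneous annihilating element of degree 0
  have hv : (DirectSum.decompose 𝒜 t vstar : S) ≠ 0 := (hmemsupp t vstar).mp hvstar_mem
  have hxex : ∃ x : S, x ∈ 𝒜 (0 : Fin k → ℤ) ∧ x ≠ 0 ∧ ∀ a ∈ A, a * x = 0 := by
    by_cases hv0 : vstar = 0
    · exact ⟨(DirectSum.decompose 𝒜 t vstar : S), by rw [← hv0]; exact SetLike.coe_mem _,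
        hv, fun a ha => hcompann vstar a ha⟩
    · have hvpos : ∀ i, 0 ≤ vstar i := htpos vstar hv
      have hveq : (fun i => (((vstar i).toNat : ℤ))) = vstar :=
        funext fun i => Int.toNat_of_nonneg (hvpos i)
      have hvnne : (fun i => (vstar i).toNat) ≠ (0 : Fin k → ℕ) := by
        intro h
        apply hv0
        funext i
        have h1 := congrFun h i
        have h2 := hvpos i
        simp only [Pi.zero_apply] at h1 ⊢
        omega
      obtain ⟨y, hy, hxy⟩ := hS (fun i => (vstar i).toNat) hvnne
        (DirectSum.decompose 𝒜 t vstar : S) (by rw [hveq]; exact SetLike.coe_mem _) hv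
      rw [hveq] at hy
      refine ⟨(DirectSum.decompose 𝒜 t vstar : S) * y, ?_, hxy, ?_⟩
      · have hmm := SetLike.mul_mem_graded
          (SetLike.coe_mem (DirectSum.decompose 𝒜 t vstar)) hy
        rw [show vstar + -vstar = 0 by abel] at hmm
        exact hmm
      · intro a ha
        rw [← mul_assoc, hcompann vstar a ha, zero_mul]
  obtain ⟨x, hx0, hxne, hxann⟩ := hxex
  -- the graded two-sided ideal
  refine ⟨{ carrier := {z | MemPositiveSubring 𝒜 z ∧
              ∀ w, ∀ a ∈ A, a * (DirectSum.decompose 𝒜 z w : S) = 0}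
            zero_mem' := ⟨grA_memPos_zero 𝒜, fun w a _ => by rw [grA_dzero, mul_zero]⟩
            add_mem' := fun h1 h2 => ⟨grA_memPos_add 𝒜 h1.1 h2.1, fun w a ha => by
              rw [grA_dadd, mul_add, h1.2 w a ha, h2.2 w a ha, add_zero]⟩
            neg_mem' := fun h1 => ⟨grA_memPos_neg 𝒜 h1.1, fun w a ha => by
              rw [grA_dneg, mul_neg, h1.2 w a ha, neg_zero]⟩ }, ?_, ?_, ?_, ?_, ?_⟩
  · exact fun z hz => hz.1
  · intro z hz r hrpos
    constructor
    · refine ⟨grA_memPos_mul 𝒜 hz.1 hrpos, ?_⟩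
      intro w a ha
      refine grA_P_mul 𝒜 (fun q => a * q = 0) (mul_zero a)
        (fun p q hp hq => by
          show a * (p + q) = 0
          rw [mul_add, show a * p = 0 from hp, show a * q = 0 from hq, add_zero]) z r w ?_
      intro u u' _
      rw [← mul_assoc, hz.2 u a ha, zero_mul]
    · refine ⟨grA_memPos_mul 𝒜 hrpos hz.1, ?_⟩
      intro w a ha
      refine grA_P_mul 𝒜 (fun q => a * q = 0) (mul_zero a)
        (fun p q hp hq => by
          show a * (p + q) = 0
          rw [mul_add, show a * p = 0 from hp, show a * q = 0 from hq, add_zero]) r z w ?_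
      intro u u' _
      rw [← mul_assoc]
      exact hz.2 u' _ (hA a ha _ (grA_memPos_component 𝒜 hrpos u))
  · intro z hz a ha
    exact grA_sum_ann 𝒜 (fun w => hz.2 w a ha)
  · intro z hz v'
    refine ⟨grA_memPos_component 𝒜 hz.1 v', ?_⟩
    intro w a ha
    by_cases h : v' = w
    · rw [← h, DirectSum.decompose_of_mem_same 𝒜 (SetLike.coe_mem _)]
      exact hz.2 v' a ha
    · rw [DirectSum.decompose_of_mem_ne 𝒜 (SetLike.coe_mem _) h, mul_zero]
  · refine ⟨x, ⟨grA_memPos_of_mem 𝒜 hx0 (fun i => le_refl 0), ?_⟩, hx0, hxne⟩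
    intro w a ha
    by_cases h : (0 : Fin k → ℤ) = w
    · rw [← h, DirectSum.decompose_of_mem_same 𝒜 hx0]
      exact hxann a ha
    · rw [DirectSum.decompose_of_mem_ne 𝒜 hx0 h, mul_zero]
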